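/- arXiv:2508.00181 — 3 statements merged into one kernel-verified Lean document; each statement's English description precedes it below -/
import Mathlib

section
/- If the TU game v is superadditive, then for any maximal spanning forest F of Γ and any weakly connected component C of Γ, the sum of marginal contributions Σ_{i∈C} m_i(F) is at most v(C). Consequently the Average Forest measure is component feasible: for every component C of Γ, Σ_{i∈C} AF_i(N,v,Γ) ≤ v(C). -/
open scoped Classical
open Finset

section Preamble

variable {V : Type*} [Fintype V] [DecidableEq V]

/-- Adjacency relation of a digraph given by its arc set. -/
def Adj (A : Finset (V × V)) (i j : V) : Prop := (i, j) ∈ A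

/-- A digraph is circuit-free if it contains no directed cycle. -/
def CircuitFree (A : Finset (V × V)) : Prop :=
  ∀ i : V, ¬ Relation.TransGen (Adj A) i i

/-- In-degree of a node. -/
def inDeg (A : Finset (V × V)) (j : V) : ℕ :=
  (A.filter (fun a => a.2 = j)).card

/-- Weak connectivity (chains, ignoring orientation). -/
def WConn (A : Finset (V × V)) (i j : V) : Prop :=
  Relation.ReflTransGen (fun a b => (a, b) ∈ A ∨ (b, a) ∈ A) i j

/-- The weakly connected component of `i`, as a finset. -/
noncomputable def compF (A : Finset (V × V)) (i : V) : Finset V :=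
  Finset.univ.filter (fun j => WConn A i j)

/-- `IsPath A p` : `p` is a (nonempty) directed path along arcs of `A`. -/
def IsPath (A : Finset (V × V)) : List V → Prop
  | [] => False
  | [_] => True
  | i :: j :: l => (i, j) ∈ A ∧ IsPath A (j :: l)

/-- The digraph `A` restricted to the node set `K` is an arborescence:
there is a root `r ∈ K` with a unique directed path from `r` to every node of `K`. -/
def IsArbOn (A : Finset (V × V)) (K : Set V) : Prop :=
  ∃ r ∈ K, ∀ i ∈ K, ∃! p : List V,
    IsPath A p ∧ p.head? = some r ∧ p.getLast? = some i

/-- A forest: every weakly connected component is an arborescence. -/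
def IsForest (A : Finset (V × V)) : Prop :=
  ∀ i : V, IsArbOn A {j | WConn A i j}

/-- `F` is a maximal spanning forest of the digraph `A`. -/
def IsMaxSpanningForest (A F : Finset (V × V)) : Prop :=
  F ⊆ A ∧ IsForest F ∧ ∀ a ∈ A, a ∉ F → ¬ IsForest (insert a F)

/-- The collection of all maximal spanning forests of `A`. -/
noncomputable def maxForests (A : Finset (V × V)) : Finset (Finset (V × V)) :=
  A.powerset.filter (fun F => IsMaxSpanningForest A F)

/-- `S̄_F(i)` : the node `i` together with all its successors in `F`. -/
noncomputable def succSet (F : Finset (V × V)) (i : V) : Finset V :=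
  Finset.univ.filter (fun j => Relation.ReflTransGen (Adj F) i j)

/-- `Ŝ_F(i)` : the immediate successors of `i` in `F`. -/
noncomputable def immSucc (F : Finset (V × V)) (i : V) : Finset V :=
  Finset.univ.filter (fun j => (i, j) ∈ F)

/-- Marginal contribution of player `i` with respect to the forest `F`. -/
noncomputable def marg (v : Finset V → ℝ) (F : Finset (V × V)) (i : V) : ℝ :=
  v (succSet F i) - ∑ j ∈ immSucc F i, v (succSet F j)

/-- The Average Forest leadership measure. -/
noncomputable def AF (v : Finset V → ℝ) (A : Finset (V × V)) (i : V) : ℝ :=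
  (∑ F ∈ maxForests A, marg v F i) / (maxForests A).card

/-- The node sets of the arborescence components of a forest `F`. -/
noncomputable def comps (F : Finset (V × V)) : Finset (Finset V) :=
  Finset.univ.image (fun i => compF F i)

/-- Productivity of the organisational situation. -/
noncomputable def Productivity (v : Finset V → ℝ) (A : Finset (V × V)) : ℝ :=
  (∑ F ∈ maxForests A, ∑ K ∈ comps F, v K) / (maxForests A).card

/-- Superadditivity of a TU game. -/
def Superadditive (v : Finset V → ℝ) : Prop :=
  ∀ S Q : Finset V, Disjoint S Q → v S + v Q ≤ v (S ∪ Q)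

/-- Weak connectedness of the digraph. -/
def WeaklyConnected (A : Finset (V × V)) : Prop :=
  ∀ i j : V, WConn A i j

/-- Quasi-strong connectedness: existence of a root reaching every node. -/
def HasRoot (A : Finset (V × V)) : Prop :=
  ∃ r : V, ∀ i : V, Relation.ReflTransGen (Adj A) r i

end Preamble

set_option linter.unusedSectionVars false
section MyAux
variable {V : Type*} [Fintype V] [DecidableEq V]

lemma my_circuitFree_subset {A F : Finset (V × V)} (hFA : F ⊆ A) (hA : CircuitFree A) :
    CircuitFree F := fun i h => hA i (Relation.TransGen.mono (fun _ _ hab => hFA hab) _ _ h)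

lemma my_isPath_append {F : Finset (V × V)} {p : List V} {x k : V}
    (hp : IsPath F p) (hl : p.getLast? = some x) (hxk : (x, k) ∈ F) :
    IsPath F (p ++ [k]) := by
  induction p with
  | nil => exact hp.elim
  | cons a t ih =>
    cases t with
    | nil =>
      simp only [List.getLast?_singleton, Option.some.injEq] at hl
      subst hl
      exact ⟨hxk, trivial⟩
    | cons b t2 =>
      obtain ⟨hab, htail⟩ := hp
      exact ⟨hab, ih htail (by simpa using hl)⟩

lemma my_pred_unique {F : Finset (V × V)} (hF : IsForest F) {a b k : V}
    (ha : (a, k) ∈ F) (hb : (b, k) ∈ F) : a = b := by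
  obtain ⟨r, _, hpath⟩ := hF k
  have hka : WConn F k a := Relation.ReflTransGen.single (Or.inr ha)
  have hkb : WConn F k b := Relation.ReflTransGen.single (Or.inr hb)
  obtain ⟨pa, ⟨hpa, hha, hla⟩, -⟩ := hpath a hka
  obtain ⟨pb, ⟨hpb, hhb, hlb⟩, -⟩ := hpath b hkb
  obtain ⟨pk, _, hkuniq⟩ := hpath k Relation.ReflTransGen.refl
  have e1 : pa ++ [k] = pk := by
    refine hkuniq _ ⟨my_isPath_append hpa hla ha, ?_, by simp⟩
    cases pa with
    | nil => simp at hha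
    | cons x t => simpa using hha
  have e2 : pb ++ [k] = pk := by
    refine hkuniq _ ⟨my_isPath_append hpb hlb hb, ?_, by simp⟩
    cases pb with
    | nil => simp at hhb
    | cons x t => simpa using hhb
  have hab : pa = pb := by
    have := e1.trans e2.symm
    simpa using this
  rw [hab, hlb] at hla
  exact (Option.some_injective _ hla).symm

/-- Ancestors of a node. -/
noncomputable def myAnc (F : Finset (V × V)) (j : V) : Finset V :=
  Finset.univ.filter (fun p => Relation.ReflTransGen (Adj F) p j)

lemma my_mem_anc_self (F : Finset (V × V)) (j : V) : j ∈ myAnc F j :=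
  Finset.mem_filter.mpr ⟨Finset.mem_univ j, Relation.ReflTransGen.refl⟩

lemma my_anc_lt {F : Finset (V × V)} (hF : CircuitFree F) {p j : V} (h : (p, j) ∈ F) :
    (myAnc F p).card < (myAnc F j).card := by
  apply Finset.card_lt_card
  rw [Finset.ssubset_def]
  constructor
  · intro x hx
    simp only [myAnc, Finset.mem_filter, Finset.mem_univ, true_and] at hx ⊢
    exact hx.tail h
  · intro hsub
    have := hsub (my_mem_anc_self F j)
    simp only [myAnc, Finset.mem_filter, Finset.mem_univ, true_and] at this
    exact hF j (Relation.TransGen.tail' this h)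

lemma my_exists_root_aux {F : Finset (V × V)} (hF : CircuitFree F) :
    ∀ n (j : V), (myAnc F j).card ≤ n →
      ∃ r, (∀ p, (p, r) ∉ F) ∧ Relation.ReflTransGen (Adj F) r j := by
  intro n
  induction n with
  | zero =>
    intro j hj
    have := Finset.card_pos.mpr ⟨j, my_mem_anc_self F j⟩
    omega
  | succ n ih =>
    intro j hj
    by_cases h : ∃ p, (p, j) ∈ F
    · obtain ⟨p, hp⟩ := h
      have hlt := my_anc_lt hF hp
      obtain ⟨r, hr, hrp⟩ := ih p (by omega)
      exact ⟨r, hr, hrp.tail hp⟩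
    · exact ⟨j, fun p hp => h ⟨p, hp⟩, Relation.ReflTransGen.refl⟩

lemma my_exists_root {F : Finset (V × V)} (hF : CircuitFree F) (j : V) :
    ∃ r, (∀ p, (p, r) ∉ F) ∧ Relation.ReflTransGen (Adj F) r j :=
  my_exists_root_aux hF _ j le_rfl

lemma my_root_unique_aux {F : Finset (V × V)} (hCF : CircuitFree F) (hFo : IsForest F) :
    ∀ n (j : V), (myAnc F j).card ≤ n → ∀ r r', (∀ p, (p, r) ∉ F) → (∀ p, (p, r') ∉ F) →
      Relation.ReflTransGen (Adj F) r j → Relation.ReflTransGen (Adj F) r' j → r = r' := by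
  intro n
  induction n with
  | zero =>
    intro j hj
    have := Finset.card_pos.mpr ⟨j, my_mem_anc_self F j⟩
    omega
  | succ n ih =>
    intro j hj r r' hr hr' hrj hr'j
    rcases hrj.cases_tail with h1 | ⟨p, hrp, hpj⟩
    · rcases hr'j.cases_tail with h2 | ⟨q, _, hqj⟩
      · rw [← h1, ← h2]
      · rw [h1] at hqj; exact absurd hqj (hr q)
    · rcases hr'j.cases_tail with h2 | ⟨q, hr'q, hqj⟩
      · rw [h2] at hpj; exact absurd hpj (hr' p)
      · have hpq : p = q := my_pred_unique hFo hpj hqj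
        subst hpq
        have hlt := my_anc_lt hCF hpj
        exact ih p (by omega) r r' hr hr' hrp hr'q

lemma my_root_unique {F : Finset (V × V)} (hCF : CircuitFree F) (hFo : IsForest F)
    {j r r' : V} (hr : ∀ p, (p, r) ∉ F) (hr' : ∀ p, (p, r') ∉ F)
    (h1 : Relation.ReflTransGen (Adj F) r j) (h2 : Relation.ReflTransGen (Adj F) r' j) :
    r = r' :=
  my_root_unique_aux hCF hFo _ j le_rfl r r' hr hr' h1 h2

lemma my_superadd_sum {v : Finset V → ℝ} (hv0 : v ∅ = 0) (hsa : Superadditive v)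
    (R : Finset V) (S : V → Finset V) :
    (∀ r ∈ R, ∀ r' ∈ R, r ≠ r' → Disjoint (S r) (S r')) →
    ∑ r ∈ R, v (S r) ≤ v (R.biUnion S) := by
  induction R using Finset.induction_on with
  | empty => intro _; simp [hv0]
  | @insert a R' ha ih =>
    intro hdisj
    rw [Finset.biUnion_insert, Finset.sum_insert ha]
    have hd : Disjoint (S a) (R'.biUnion S) := by
      rw [Finset.disjoint_biUnion_right]
      intro r hr
      exact hdisj a (Finset.mem_insert_self _ _) r (Finset.mem_insert_of_mem hr)
        (by rintro rfl; exact ha hr)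
    have hih := ih (fun r hr r' hr' hne =>
      hdisj r (Finset.mem_insert_of_mem hr) r' (Finset.mem_insert_of_mem hr') hne)
    calc v (S a) + ∑ r ∈ R', v (S r) ≤ v (S a) + v (R'.biUnion S) := by linarith
      _ ≤ v (S a ∪ R'.biUnion S) := hsa _ _ hd

lemma my_empty_forest : IsForest (∅ : Finset (V × V)) := by
  intro i
  refine ⟨i, Relation.ReflTransGen.refl, ?_⟩
  intro k hk
  have hik : k = i := by
    have hw : WConn (∅ : Finset (V × V)) i k := hk
    induction hw with
    | refl => rfl
    | tail _ h2 _ => simp at h2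
  subst hik
  refine ⟨[k], ⟨trivial, rfl, rfl⟩, ?_⟩
  rintro p ⟨hp, hh, -⟩
  cases p with
  | nil => simp at hh
  | cons x t =>
    cases t with
    | nil =>
      simp only [List.head?_cons, Option.some.injEq] at hh
      rw [hh]
    | cons y t2 => exact absurd hp.1 (by simp)

lemma my_maxForests_nonempty (A : Finset (V × V)) : (maxForests A).Nonempty := by
  classical
  have h0 : (∅ : Finset (V × V)) ∈ A.powerset.filter (fun F => IsForest F) := by
    simp only [Finset.mem_filter, Finset.mem_powerset]
    exact ⟨Finset.empty_subset _, my_empty_forest⟩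
  obtain ⟨F, hF, hmax⟩ := Finset.exists_max_image _ Finset.card ⟨_, h0⟩
  simp only [Finset.mem_filter, Finset.mem_powerset] at hF
  refine ⟨F, ?_⟩
  simp only [maxForests, Finset.mem_filter, Finset.mem_powerset]
  refine ⟨hF.1, hF.1, hF.2, fun a ha hna hforest => ?_⟩
  have hmem : insert a F ∈ A.powerset.filter (fun F => IsForest F) := by
    simp only [Finset.mem_filter, Finset.mem_powerset]
    exact ⟨Finset.insert_subset ha hF.1, hforest⟩
  have := hmax _ hmem
  rw [Finset.card_insert_of_notMem hna] at this
  omega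

lemma my_sum_marg_le {A F : Finset (V × V)} (hA : CircuitFree A)
    (hF : F ∈ maxForests A) {v : Finset V → ℝ} (hv0 : v ∅ = 0) (hsa : Superadditive v)
    (i : V) : ∑ j ∈ compF A i, marg v F j ≤ v (compF A i) := by
  classical
  rw [maxForests, Finset.mem_filter, Finset.mem_powerset,
    IsMaxSpanningForest] at hF
  obtain ⟨hFA, -, hFor, -⟩ := hF
  have hCF : CircuitFree F := my_circuitFree_subset hFA hA
  set C := compF A i with hC
  have memC : ∀ j, j ∈ C ↔ WConn A i j := by
    intro j; simp [hC, compF]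
  -- forward closure
  have fwd : ∀ {j k : V}, j ∈ C → Relation.ReflTransGen (Adj F) j k → k ∈ C := by
    intro j k hj hjk
    rw [memC] at hj ⊢
    exact hj.trans (Relation.ReflTransGen.mono (fun a b hab => Or.inl (hFA hab)) _ _ hjk)
  have wsymm : Symmetric (fun a b : V => (a, b) ∈ A ∨ (b, a) ∈ A) := by
    intro a b hab; exact hab.symm
  have bwd : ∀ {j k : V}, k ∈ C → Relation.ReflTransGen (Adj F) j k → j ∈ C := by
    intro j k hk hjk
    rw [memC] at hk ⊢
    have : WConn A j k := Relation.ReflTransGen.mono (fun a b hab => Or.inl (hFA hab)) _ _ hjk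
    exact hk.trans ((@Relation.ReflTransGen.stdSymm _ _ ⟨fun a b h => wsymm h⟩).symm _ _ this)
  set isRoot : V → Prop := fun r => ∀ p, (p, r) ∉ F with hisRoot
  -- split the marginal sum
  have hsplit : ∑ j ∈ C, marg v F j
      = ∑ j ∈ C, v (succSet F j) - ∑ j ∈ C, ∑ k ∈ immSucc F j, v (succSet F k) := by
    simp [marg, Finset.sum_sub_distrib]
  -- double sum equals sum over non-roots of C
  have hpd : (↑C : Set V).PairwiseDisjoint (immSucc F) := by
    intro a _ b _ hab
    simp only [Function.onFun]
    rw [Finset.disjoint_left]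
    intro x hx hx'
    simp only [immSucc, Finset.mem_filter, Finset.mem_univ, true_and] at hx hx'
    exact hab (my_pred_unique hFor hx hx')
  have hbU : C.biUnion (immSucc F) = C.filter (fun k => ¬ isRoot k) := by
    ext k
    simp only [Finset.mem_biUnion, Finset.mem_filter, immSucc, Finset.mem_univ,
      true_and, hisRoot]
    push_neg
    constructor
    · rintro ⟨j, hj, hjk⟩
      exact ⟨fwd hj (Relation.ReflTransGen.single hjk), j, hjk⟩
    · rintro ⟨hk, j, hjk⟩
      exact ⟨j, bwd hk (Relation.ReflTransGen.single hjk), hjk⟩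
  have hdbl : ∑ j ∈ C, ∑ k ∈ immSucc F j, v (succSet F k)
      = ∑ k ∈ C.filter (fun k => ¬ isRoot k), v (succSet F k) := by
    rw [← Finset.sum_biUnion hpd, hbU]
  have hpart : ∑ j ∈ C, v (succSet F j)
      = ∑ r ∈ C.filter isRoot, v (succSet F r)
        + ∑ k ∈ C.filter (fun k => ¬ isRoot k), v (succSet F k) :=
    (Finset.sum_filter_add_sum_filter_not C isRoot _).symm
  rw [hsplit, hdbl, hpart]
  have hroots : ∑ r ∈ C.filter isRoot, v (succSet F r) ≤ v (C.filter isRoot |>.biUnion (succSet F)) := by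
    apply my_superadd_sum hv0 hsa
    intro r hr r' hr' hne
    simp only [Finset.mem_filter, hisRoot] at hr hr'
    rw [Finset.disjoint_left]
    intro x hx hx'
    simp only [succSet, Finset.mem_filter, Finset.mem_univ, true_and] at hx hx'
    exact hne (my_root_unique hCF hFor hr.2 hr'.2 hx hx')
  have hcover : (C.filter isRoot).biUnion (succSet F) = C := by
    ext k
    simp only [Finset.mem_biUnion, Finset.mem_filter, succSet, Finset.mem_univ, true_and]
    constructor
    · rintro ⟨r, ⟨hrC, -⟩, hrk⟩
      exact fwd hrC hrk
    · intro hk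
      obtain ⟨r, hr, hrk⟩ := my_exists_root hCF k
      exact ⟨r, ⟨bwd hk hrk, hr⟩, hrk⟩
  rw [hcover] at hroots
  calc ∑ r ∈ C.filter isRoot, v (succSet F r)
        + ∑ k ∈ C.filter (fun k => ¬ isRoot k), v (succSet F k)
        - ∑ k ∈ C.filter (fun k => ¬ isRoot k), v (succSet F k)
      = ∑ r ∈ C.filter isRoot, v (succSet F r) := by ring
    _ ≤ v C := hroots

end MyAux
/-- component feasibility. If `v` is superadditive, then for every maximal
spanning forest the marginal contributions over a component of `Γ` sum to at most the
worth of the component, and consequently the Average Forest measure is component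
feasible. -/
theorem AF_component_feasible {V : Type*} [Fintype V] [DecidableEq V]
    (A : Finset (V × V)) (hA : CircuitFree A)
    (v : Finset V → ℝ) (hv0 : v ∅ = 0) (hsa : Superadditive v) :
    (∀ F ∈ maxForests A, ∀ i : V, ∑ j ∈ compF A i, marg v F j ≤ v (compF A i)) ∧
    (∀ i : V, ∑ j ∈ compF A i, AF v A j ≤ v (compF A i)) := by
  classical
  have hpart1 : ∀ F ∈ maxForests A, ∀ i : V,
      ∑ j ∈ compF A i, marg v F j ≤ v (compF A i) :=
    fun F hF i => my_sum_marg_le hA hF hv0 hsa i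
  refine ⟨hpart1, fun i => ?_⟩
  have hne := my_maxForests_nonempty A
  have hn : (0 : ℝ) < (maxForests A).card := by
    exact_mod_cast Finset.card_pos.mpr hne
  have heq : ∑ j ∈ compF A i, AF v A j
      = (∑ F ∈ maxForests A, ∑ j ∈ compF A i, marg v F j) / (maxForests A).card := by
    rw [Finset.sum_comm]
    simp [AF, Finset.sum_div]
  rw [heq, div_le_iff₀ hn]
  calc ∑ F ∈ maxForests A, ∑ j ∈ compF A i, marg v F j
      ≤ ∑ _F ∈ maxForests A, v (compF A i) :=
        Finset.sum_le_sum (fun F hF => hpart1 F hF i)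
    _ = v (compF A i) * (maxForests A).card := by
        rw [Finset.sum_const, nsmul_eq_mul, mul_comm]
end

section
/- The total Average Forest value of all players equals the productivity of the organisational situation: Σ_{i∈N} AF_i(N,v,Γ) = Prod(N,v,Γ), where Prod(N,v,Γ) is the average over all maximal spanning forests F of Γ of Σ_{K ∈ components of F} v(K). -/
open scoped Classical
open Finset

section Aux

variable {V : Type*} [Fintype V] [DecidableEq V] {F : Finset (V × V)}

lemma isPath_ne_nil {p : List V} (hp : IsPath F p) : p ≠ [] := by
  cases p with
  | nil => exact absurd hp (by simp [IsPath])
  | cons a t => simp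

lemma isPath_append : ∀ (p : List V) (q j : V), IsPath F p → p.getLast? = some q →
    (q, j) ∈ F → IsPath F (p ++ [j]) := by
  intro p
  induction p with
  | nil => intro q j hp; exact absurd hp (by simp [IsPath])
  | cons a t ih =>
    intro q j hp hl hqj
    cases t with
    | nil =>
      simp at hl
      subst hl
      exact ⟨hqj, trivial⟩
    | cons b l =>
      obtain ⟨hab, hrest⟩ := hp
      have hl' : (b :: l).getLast? = some q := by
        rw [List.getLast?_cons_cons] at hl; exact hl
      exact ⟨hab, ih q j hrest hl' hqj⟩

lemma isPath_reflTransGen : ∀ (p : List V) (i j : V), IsPath F p → p.head? = some i →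
    p.getLast? = some j → Relation.ReflTransGen (Adj F) i j := by
  intro p
  induction p with
  | nil => intro i j hp; exact absurd hp (by simp [IsPath])
  | cons a t ih =>
    intro i j hp hh hl
    simp at hh; subst hh
    cases t with
    | nil => simp at hl; subst hl; exact Relation.ReflTransGen.refl
    | cons b l =>
      obtain ⟨hab, hrest⟩ := hp
      have hl' : (b :: l).getLast? = some j := by
        rw [List.getLast?_cons_cons] at hl; exact hl
      exact Relation.ReflTransGen.head hab (ih b j hrest rfl hl')

lemma exists_pred_of_path : ∀ (p : List V) (j : V), IsPath F p → p.getLast? = some j →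
    p = [j] ∨ ∃ q, (q, j) ∈ F := by
  intro p
  induction p with
  | nil => intro j hp; exact absurd hp (by simp [IsPath])
  | cons a t ih =>
    intro j hp hl
    cases t with
    | nil => simp at hl; subst hl; exact Or.inl rfl
    | cons b l =>
      obtain ⟨hab, hrest⟩ := hp
      have hl' : (b :: l).getLast? = some j := by
        rw [List.getLast?_cons_cons] at hl; exact hl
      rcases ih j hrest hl' with h | h
      · exact Or.inr ⟨a, by rw [List.cons_eq_cons] at h; rw [h.1] at hab; exact hab⟩
      · exact Or.inr h

lemma wconn_symm {i j : V} (h : WConn F i j) : WConn F j i :=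
  by
    haveI : Std.Symm (fun a b : V => (a, b) ∈ F ∨ (b, a) ∈ F) := ⟨fun a b hab => hab.symm⟩
    exact (Relation.ReflTransGen.stdSymm (r := fun a b : V => (a, b) ∈ F ∨ (b, a) ∈ F)).symm i j h

lemma wconn_of_reflTransGen {i j : V} (h : Relation.ReflTransGen (Adj F) i j) :
    WConn F i j := Relation.ReflTransGen.mono (p := fun a b : V => (a, b) ∈ F ∨ (b, a) ∈ F) (fun a b hab => Or.inl hab) i j h

lemma compF_eq_of_wconn {i j : V} (h : WConn F i j) : compF F i = compF F j := by
  ext k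
  simp only [compF, Finset.mem_filter, Finset.mem_univ, true_and]
  exact ⟨fun hk => (wconn_symm h).trans hk, fun hk => h.trans hk⟩

lemma mem_compF_self (i : V) : i ∈ compF F i := by
  simp only [compF, Finset.mem_filter, Finset.mem_univ, true_and]
  exact Relation.ReflTransGen.refl

/-- Uniqueness of predecessors in a forest. -/
lemma pred_unique (hF : IsForest F) {q1 q2 j : V} (h1 : (q1, j) ∈ F) (h2 : (q2, j) ∈ F) :
    q1 = q2 := by
  obtain ⟨r, hrK, hu⟩ := hF j
  have hq1 : q1 ∈ {k | WConn F j k} :=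
    Relation.ReflTransGen.single (Or.inr h1)
  have hq2 : q2 ∈ {k | WConn F j k} :=
    Relation.ReflTransGen.single (Or.inr h2)
  obtain ⟨p1, ⟨hp1, hh1, hl1⟩, _⟩ := hu q1 hq1
  obtain ⟨p2, ⟨hp2, hh2, hl2⟩, _⟩ := hu q2 hq2
  have hj : j ∈ {k | WConn F j k} := Relation.ReflTransGen.refl
  obtain ⟨p, _, hup⟩ := hu j hj
  have e1 : IsPath F (p1 ++ [j]) := isPath_append p1 q1 j hp1 hl1 h1
  have e2 : IsPath F (p2 ++ [j]) := isPath_append p2 q2 j hp2 hl2 h2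
  have hh1' : (p1 ++ [j]).head? = some r := by
    cases p1 with
    | nil => exact absurd hp1 (by simp [IsPath])
    | cons a t => simpa using hh1
  have hh2' : (p2 ++ [j]).head? = some r := by
    cases p2 with
    | nil => exact absurd hp2 (by simp [IsPath])
    | cons a t => simpa using hh2
  have heq : p1 ++ [j] = p2 ++ [j] := by
    rw [hup (p1 ++ [j]) ⟨e1, hh1', by simp⟩, hup (p2 ++ [j]) ⟨e2, hh2', by simp⟩]
  have : p1 = p2 := by
    have := congrArg List.reverse heq
    simpa using this
  rw [this] at hl1
  rw [hl1] at hl2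
  exact Option.some_injective _ hl2

lemma no_pred_of_isArb {r : V} {K : Set V} (hr : r ∈ K)
    (hu : ∀ k ∈ K, ∃! p : List V, IsPath F p ∧ p.head? = some r ∧ p.getLast? = some k)
    (hK : ∀ q j, (q, j) ∈ F → j ∈ K → q ∈ K) :
    ∀ q, (q, r) ∉ F := by
  intro q hq
  have hqK : q ∈ K := hK q r hq hr
  obtain ⟨p, ⟨hp, hh, hl⟩, _⟩ := hu q hqK
  obtain ⟨p0, _, hup⟩ := hu r hr
  have e : IsPath F (p ++ [r]) := isPath_append p q r hp hl hq
  have hh' : (p ++ [r]).head? = some r := by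
    cases p with
    | nil => exact absurd hp (by simp [IsPath])
    | cons a t => simpa using hh
  have h1 : p ++ [r] = p0 := hup (p ++ [r]) ⟨e, hh', by simp⟩
  have h2 : [r] = p0 := hup [r] ⟨trivial, rfl, rfl⟩
  rw [← h2] at h1
  have hlen := congrArg List.length h1
  simp only [List.length_append, List.length_cons, List.length_nil] at hlen
  have : p.length = 0 := by omega
  exact isPath_ne_nil hp (List.length_eq_zero_iff.mp this)

/-- Any no-pred node of the component equals the root of the component. -/
lemma root_unique {r r' : V} {K : Set V} (hr' : r' ∈ K)
    (hu : ∀ k ∈ K, ∃! p : List V, IsPath F p ∧ p.head? = some r ∧ p.getLast? = some k)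
    (hnp : ∀ q, (q, r') ∉ F) : r' = r := by
  obtain ⟨p, ⟨hp, hh, hl⟩, _⟩ := hu r' hr'
  rcases exists_pred_of_path p r' hp hl with h | ⟨q, hq⟩
  · rw [h] at hh; simp at hh; exact hh
  · exact absurd hq (hnp q)

lemma comp_closed {i q j : V} (hq : (q, j) ∈ F) (hj : j ∈ {k | WConn F i k}) :
    q ∈ {k | WConn F i k} :=
  Relation.ReflTransGen.tail hj (Or.inr hq)

/-- For a root (no predecessor), the successor set equals the component. -/
lemma succSet_eq_compF (hF : IsForest F) {r : V} (hnp : ∀ q, (q, r) ∉ F) :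
    succSet F r = compF F r := by
  obtain ⟨r0, hr0K, hu⟩ := hF r
  have hrr0 : r = r0 :=
    root_unique (r := r0) (K := {k | WConn F r k}) Relation.ReflTransGen.refl hu hnp
  ext j
  simp only [succSet, compF, Finset.mem_filter, Finset.mem_univ, true_and]
  constructor
  · exact fun h => wconn_of_reflTransGen h
  · intro h
    obtain ⟨p, ⟨hp, hh, hl⟩, _⟩ := hu j h
    exact isPath_reflTransGen p r j hp (hrr0 ▸ hh) hl

/-- Per-forest identity: total marginal contribution equals sum over components. -/
lemma sum_marg_eq (v : Finset V → ℝ) (hF : IsForest F) :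
    ∑ i : V, marg v F i = ∑ K ∈ comps F, v K := by
  classical
  have key : ∑ i : V, ∑ j ∈ immSucc F i, v (succSet F j)
      = ∑ j ∈ Finset.univ.filter (fun j => ∃ q, (q, j) ∈ F), v (succSet F j) := by
    rw [← Finset.sum_biUnion]
    · congr 1
      ext j
      simp [immSucc]
    · intro i _ i' _ hne
      simp only [Finset.disjoint_left, immSucc, Finset.mem_filter, Finset.mem_univ,
        true_and]
      intro j hj hj'
      exact hne (pred_unique hF hj hj')
  have split : ∑ j ∈ Finset.univ.filter (fun j => ∃ q, (q, j) ∈ F), v (succSet F j)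
      + ∑ j ∈ Finset.univ.filter (fun j => ¬ ∃ q, (q, j) ∈ F), v (succSet F j)
      = ∑ j : V, v (succSet F j) := Finset.sum_filter_add_sum_filter_not _ _ _
  have hroots : ∑ j ∈ Finset.univ.filter (fun j => ¬ ∃ q, (q, j) ∈ F), v (succSet F j)
      = ∑ K ∈ comps F, v K := by
    apply Finset.sum_bij (i := fun r _ => compF F r)
    · intro r _
      exact Finset.mem_image.mpr ⟨r, Finset.mem_univ r, rfl⟩
    · intro r hr r' hr' heq
      simp only [Finset.mem_filter, Finset.mem_univ, true_and, not_exists] at hr hr'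
      have hw : WConn F r r' := by
        have : r' ∈ compF F r := heq ▸ mem_compF_self r'
        simpa [compF] using this
      obtain ⟨r0, hr0K, hu⟩ := hF r
      have h1 : r = r0 := root_unique (K := {k | WConn F r k})
        Relation.ReflTransGen.refl hu hr
      have h2 : r' = r0 := root_unique (K := {k | WConn F r k}) hw hu hr'
      rw [h1, h2]
    · intro K hK
      obtain ⟨i, _, rfl⟩ := Finset.mem_image.mp hK
      obtain ⟨r0, hr0K, hu⟩ := hF i
      have hnp : ∀ q, (q, r0) ∉ F :=
        no_pred_of_isArb hr0K hu (fun q j hqj hj => comp_closed hqj hj)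
      refine ⟨r0, ?_, ?_⟩
      · simp only [Finset.mem_filter, Finset.mem_univ, true_and, not_exists]
        exact hnp
      · exact (compF_eq_of_wconn hr0K).symm
    · intro r hr
      simp only [Finset.mem_filter, Finset.mem_univ, true_and, not_exists] at hr
      rw [succSet_eq_compF hF hr]
  calc ∑ i : V, marg v F i
      = ∑ i : V, v (succSet F i) - ∑ i : V, ∑ j ∈ immSucc F i, v (succSet F j) := by
        rw [← Finset.sum_sub_distrib]; rfl
    _ = ∑ K ∈ comps F, v K := by
        rw [key, ← split, ← hroots]; ring

end Aux
/-- the total Average Forest value equals the productivity of the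
organisational situation. -/
theorem sum_AF_eq_productivity {V : Type*} [Fintype V] [DecidableEq V]
    (A : Finset (V × V)) (hA : CircuitFree A) (v : Finset V → ℝ) :
    ∑ i : V, AF v A i = Productivity v A := by
  classical
  unfold AF Productivity
  rw [← Finset.sum_div]
  congr 1
  rw [Finset.sum_comm]
  refine Finset.sum_congr rfl fun F hF => ?_
  have hmsf : IsMaxSpanningForest A F := by
    have := hF
    simp only [maxForests, Finset.mem_filter] at this
    exact this.2
  have hforest : IsForest F := hmsf.2.1
  exact sum_marg_eq v hforest
end

section
/- Successor equivalence of the Average Forest measure: for any arc (i₀,j₀) of Γ, and for every node k that is j₀ itself or a successor of j₀ in Γ, AF_k(N,v,Γ) = AF_k(N,v,Γ−(i₀,j₀)), where Γ−(i₀,j₀) is Γ with the arc (i₀,j₀) removed. -/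
open scoped Classical
open Finset

section AuxForest

open Relation

variable {V : Type*} [Fintype V] [DecidableEq V]

lemma circuitFree_subset {F A : Finset (V × V)} (hFA : F ⊆ A) (hA : CircuitFree A) :
    CircuitFree F := fun i hi => hA i (Relation.TransGen.mono (fun _ _ h => hFA h) _ _ hi)

lemma mem_inDeg_filter {F : Finset (V × V)} {i j : V} (h : (i, j) ∈ F) :
    (i, j) ∈ F.filter (fun a => a.2 = j) := Finset.mem_filter.mpr ⟨h, rfl⟩

lemma inDeg_pos_iff {F : Finset (V × V)} {j : V} :
    1 ≤ inDeg F j ↔ ∃ i, (i, j) ∈ F := by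
  unfold inDeg
  rw [Nat.one_le_iff_ne_zero, Ne, Finset.card_eq_zero, ← Ne,
    ← Finset.nonempty_iff_ne_empty]
  constructor
  · rintro ⟨⟨i, j'⟩, hm⟩
    obtain ⟨hF, h2⟩ := Finset.mem_filter.mp hm
    exact ⟨i, by rwa [show j = j' from h2.symm]⟩
  · rintro ⟨i, hi⟩; exact ⟨(i, j), mem_inDeg_filter hi⟩

lemma inDeg_eq_zero_iff {F : Finset (V × V)} {j : V} :
    inDeg F j = 0 ↔ ∀ i, (i, j) ∉ F := by
  unfold inDeg
  rw [Finset.card_eq_zero, Finset.filter_eq_empty_iff]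
  constructor
  · intro h i hi
    exact (h hi) rfl
  · intro h a ha hc
    exact h a.1 (by rw [← hc, Prod.mk.eta]; exact ha)

lemma parent_unique {F : Finset (V × V)} (hdeg : ∀ j, inDeg F j ≤ 1) {i i' j : V}
    (h : (i, j) ∈ F) (h' : (i', j) ∈ F) : i = i' := by
  have := Finset.card_le_one.mp (hdeg j) _ (mem_inDeg_filter h) _ (mem_inDeg_filter h')
  exact congrArg Prod.fst this

lemma wf_parent (F : Finset (V × V)) (hacyc : CircuitFree F) :
    WellFounded (fun a b : V => (a, b) ∈ F) := by
  have h1 : IsIrrefl V (Relation.TransGen (Adj F)) := ⟨hacyc⟩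
  have h2 : WellFounded (Relation.TransGen (Adj F)) :=
    Finite.wellFounded_of_trans_of_irrefl _
  exact Subrelation.wf (fun {a b} h => Relation.TransGen.single h) h2

noncomputable def rootOf {F : Finset (V × V)} (hwf : WellFounded fun a b : V => (a, b) ∈ F) :
    V → V :=
  hwf.fix fun j ih => if h : ∃ i, (i, j) ∈ F then ih h.choose h.choose_spec else j

noncomputable def pathTo {F : Finset (V × V)} (hwf : WellFounded fun a b : V => (a, b) ∈ F) :
    V → List V :=
  hwf.fix fun j ih => if h : ∃ i, (i, j) ∈ F then ih h.choose h.choose_spec ++ [j] else [j]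

lemma rootOf_eq {F : Finset (V × V)} (hwf : WellFounded fun a b : V => (a, b) ∈ F) (j : V) :
    rootOf hwf j = if h : ∃ i, (i, j) ∈ F then rootOf hwf h.choose else j := by
  rw [rootOf, WellFounded.fix_eq]

lemma pathTo_eq {F : Finset (V × V)} (hwf : WellFounded fun a b : V => (a, b) ∈ F) (j : V) :
    pathTo hwf j = if h : ∃ i, (i, j) ∈ F then pathTo hwf h.choose ++ [j] else [j] := by
  rw [pathTo, WellFounded.fix_eq]

lemma rootOf_parent {F : Finset (V × V)} (hwf : WellFounded fun a b : V => (a, b) ∈ F)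
    (hdeg : ∀ j, inDeg F j ≤ 1) {i j : V} (hij : (i, j) ∈ F) :
    rootOf hwf j = rootOf hwf i := by
  have h : ∃ i', (i', j) ∈ F := ⟨i, hij⟩
  rw [rootOf_eq hwf j, dif_pos h]
  congr 1
  exact parent_unique hdeg h.choose_spec hij

lemma pathTo_parent {F : Finset (V × V)} (hwf : WellFounded fun a b : V => (a, b) ∈ F)
    (hdeg : ∀ j, inDeg F j ≤ 1) {i j : V} (hij : (i, j) ∈ F) :
    pathTo hwf j = pathTo hwf i ++ [j] := by
  have h : ∃ i', (i', j) ∈ F := ⟨i, hij⟩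
  rw [pathTo_eq hwf j, dif_pos h]
  congr 2
  exact parent_unique hdeg h.choose_spec hij

lemma rootOf_no_parent {F : Finset (V × V)} (hwf : WellFounded fun a b : V => (a, b) ∈ F)
    (j : V) : ¬ ∃ i, (i, rootOf hwf j) ∈ F := by
  refine hwf.induction (C := fun x => ¬ ∃ i, (i, rootOf hwf x) ∈ F) j ?_
  intro x IH
  by_cases h : ∃ i, (i, x) ∈ F
  · rw [rootOf_eq, dif_pos h]; exact IH h.choose h.choose_spec
  · rw [rootOf_eq, dif_neg h]; exact h

lemma rtg_rootOf {F : Finset (V × V)} (hwf : WellFounded fun a b : V => (a, b) ∈ F) (j : V) :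
    Relation.ReflTransGen (Adj F) (rootOf hwf j) j := by
  refine hwf.induction (C := fun x => Relation.ReflTransGen (Adj F) (rootOf hwf x) x) j ?_
  intro x IH
  by_cases h : ∃ i, (i, x) ∈ F
  · rw [rootOf_eq, dif_pos h]
    exact (IH h.choose h.choose_spec).tail h.choose_spec
  · rw [rootOf_eq, dif_neg h]

lemma isPath_nil {F : Finset (V × V)} : ¬ IsPath F ([] : List V) := fun h => h

lemma isPath_cons_cons {F : Finset (V × V)} {a b : V} {l : List V} :
    IsPath F (a :: b :: l) ↔ (a, b) ∈ F ∧ IsPath F (b :: l) := Iff.rfl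

lemma isPath_concat {F : Finset (V × V)} (q : List V) (hq : q ≠ []) (x : V) :
    IsPath F (q ++ [x]) ↔ IsPath F q ∧ (q.getLast hq, x) ∈ F := by
  induction q with
  | nil => exact absurd rfl hq
  | cons a t IH =>
    cases t with
    | nil =>
      show IsPath F [a, x] ↔ IsPath F [a] ∧ _
      rw [isPath_cons_cons]
      simp [IsPath, List.getLast]
    | cons b t' =>
      have IH' := IH (by simp)
      show IsPath F (a :: ((b :: t') ++ [x])) ↔ _
      rw [show a :: ((b :: t') ++ [x]) = a :: b :: (t' ++ [x]) from rfl, isPath_cons_cons,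
        show (b : V) :: (t' ++ [x]) = (b :: t') ++ [x] from rfl, IH',
        List.getLast_cons (by simp : (b : V) :: t' ≠ []), isPath_cons_cons]
      tauto

lemma pathTo_spec {F : Finset (V × V)} (hwf : WellFounded fun a b : V => (a, b) ∈ F) (j : V) :
    IsPath F (pathTo hwf j) ∧ (pathTo hwf j).head? = some (rootOf hwf j) ∧
      (pathTo hwf j).getLast? = some j := by
  refine hwf.induction (C := fun x => IsPath F (pathTo hwf x) ∧
    (pathTo hwf x).head? = some (rootOf hwf x) ∧ (pathTo hwf x).getLast? = some x) j ?_
  intro x IH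
  by_cases h : ∃ i, (i, x) ∈ F
  · obtain ⟨hp, hh, hl⟩ := IH h.choose h.choose_spec
    rw [pathTo_eq, dif_pos h, rootOf_eq, dif_pos h]
    have hne : pathTo hwf h.choose ≠ [] := by
      intro h0; rw [h0] at hl; simp at hl
    have hlast : (pathTo hwf h.choose).getLast hne = h.choose := by
      have := List.getLast?_eq_getLast hne
      rw [this] at hl
      exact Option.some_inj.mp hl
    refine ⟨?_, ?_, List.getLast?_concat⟩
    · rw [isPath_concat _ hne, hlast]; exact ⟨hp, h.choose_spec⟩
    · cases hq : pathTo hwf h.choose with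
      | nil => exact absurd hq hne
      | cons y t => rw [hq] at hh; simpa using hh
  · rw [pathTo_eq, dif_neg h, rootOf_eq, dif_neg h]
    exact ⟨trivial, rfl, rfl⟩

lemma path_unique {F : Finset (V × V)} (hwf : WellFounded fun a b : V => (a, b) ∈ F)
    (hdeg : ∀ j, inDeg F j ≤ 1) (p : List V) :
    IsPath F p → ∀ j, p.getLast? = some j → p.head? = some (rootOf hwf j) →
      p = pathTo hwf j := by
  induction p using List.reverseRecOn with
  | nil => intro h; exact absurd h isPath_nil
  | append_singleton q x IH =>
    intro hp j hl hh
    have hx : j = x := by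
      rw [List.getLast?_concat] at hl
      exact (Option.some_inj.mp hl).symm
    subst hx
    by_cases hqn : q = []
    · subst hqn
      have hxr : rootOf hwf j = j := by simpa using hh.symm
      have hnp : ¬ ∃ i, (i, j) ∈ F := by
        have := rootOf_no_parent hwf j; rwa [hxr] at this
      rw [pathTo_eq, dif_neg hnp]; simp
    · have hlq : q.getLast? = some (q.getLast hqn) := List.getLast?_eq_getLast hqn
      have hqp : IsPath F q ∧ (q.getLast hqn, j) ∈ F := (isPath_concat q hqn j).mp hp
      have hroot : rootOf hwf j = rootOf hwf (q.getLast hqn) :=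
        rootOf_parent hwf hdeg hqp.2
      have hhq : q.head? = some (rootOf hwf (q.getLast hqn)) := by
        rw [← hroot]
        cases q with
        | nil => exact absurd rfl hqn
        | cons a t => simpa using hh
      have hq' := IH hqp.1 (q.getLast hqn) hlq hhq
      rw [hq', ← pathTo_parent hwf hdeg hqp.2]

lemma wconn_symm_s16 {F : Finset (V × V)} {a b : V} (h : WConn F a b) : WConn F b a :=
  @Std.Symm.symm _ _ (@Relation.ReflTransGen.stdSymm _ _ ⟨fun _ _ hxy => hxy.symm⟩) _ _ h

lemma wconn_of_rtg {F : Finset (V × V)} {a b : V} (h : Relation.ReflTransGen (Adj F) a b) :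
    WConn F a b :=
  Relation.ReflTransGen.mono (fun _ _ hab => Or.inl hab) _ _ h

lemma rootOf_wconn {F : Finset (V × V)} (hwf : WellFounded fun a b : V => (a, b) ∈ F)
    (hdeg : ∀ j, inDeg F j ≤ 1) {a b : V} (h : WConn F a b) :
    rootOf hwf a = rootOf hwf b := by
  induction h with
  | refl => rfl
  | tail _ hstep IH =>
    cases hstep with
    | inl h' => rw [IH]; exact (rootOf_parent hwf hdeg h').symm
    | inr h' => rw [IH]; exact rootOf_parent hwf hdeg h'

lemma isForest_of_indeg {F : Finset (V × V)} (hacyc : CircuitFree F)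
    (hdeg : ∀ j, inDeg F j ≤ 1) : IsForest F := by
  have hwf := wf_parent F hacyc
  intro i
  refine ⟨rootOf hwf i, wconn_symm_s16 (wconn_of_rtg (rtg_rootOf hwf i)), ?_⟩
  intro j hj
  have hj' : WConn F i j := hj
  have hroot : rootOf hwf j = rootOf hwf i := (rootOf_wconn hwf hdeg hj').symm
  obtain ⟨hp, hh, hl⟩ := pathTo_spec hwf j
  refine ⟨pathTo hwf j, ⟨hp, by rw [hh, hroot], hl⟩, ?_⟩
  rintro q ⟨hq, hqh, hql⟩
  exact path_unique hwf hdeg q hq j hql (by rw [hqh, hroot])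

lemma indeg_le_one_of_isForest {F : Finset (V × V)} (h : IsForest F) (j : V) :
    inDeg F j ≤ 1 := by
  by_contra hlt
  push_neg at hlt
  obtain ⟨a, ha, b, hb, hab⟩ := Finset.one_lt_card.mp hlt
  obtain ⟨haF, ha2⟩ := Finset.mem_filter.mp ha
  obtain ⟨hbF, hb2⟩ := Finset.mem_filter.mp hb
  have haF' : (a.1, j) ∈ F := by rw [← ha2, Prod.mk.eta]; exact haF
  have hbF' : (b.1, j) ∈ F := by rw [← hb2, Prod.mk.eta]; exact hbF
  obtain ⟨r, hr, huniq⟩ := h j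
  have hwa : WConn F j a.1 := Relation.ReflTransGen.single (Or.inr haF')
  have hwb : WConn F j b.1 := Relation.ReflTransGen.single (Or.inr hbF')
  obtain ⟨pa, ⟨hpa, hpah, hpal⟩, -⟩ := huniq a.1 hwa
  obtain ⟨pb, ⟨hpb, hpbh, hpbl⟩, -⟩ := huniq b.1 hwb
  obtain ⟨pj, hpj, hju⟩ := huniq j (Relation.ReflTransGen.refl)
  have hane : pa ≠ [] := by intro h0; rw [h0] at hpal; simp at hpal
  have hbne : pb ≠ [] := by intro h0; rw [h0] at hpbl; simp at hpbl
  have hlasta : pa.getLast hane = a.1 := by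
    have := List.getLast?_eq_getLast hane
    rw [this] at hpal; exact Option.some_inj.mp hpal
  have hlastb : pb.getLast hbne = b.1 := by
    have := List.getLast?_eq_getLast hbne
    rw [this] at hpbl; exact Option.some_inj.mp hpbl
  have hIa : IsPath F (pa ++ [j]) := (isPath_concat pa hane j).mpr ⟨hpa, by rw [hlasta]; exact haF'⟩
  have hIb : IsPath F (pb ++ [j]) := (isPath_concat pb hbne j).mpr ⟨hpb, by rw [hlastb]; exact hbF'⟩
  have hha : (pa ++ [j]).head? = some r := by
    cases pa with
    | nil => exact absurd rfl hane
    | cons y t => simpa using hpah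
  have hhb : (pb ++ [j]).head? = some r := by
    cases pb with
    | nil => exact absurd rfl hbne
    | cons y t => simpa using hpbh
  have e1 := hju (pa ++ [j]) ⟨hIa, hha, List.getLast?_concat⟩
  have e2 := hju (pb ++ [j]) ⟨hIb, hhb, List.getLast?_concat⟩
  have hpapb : pa = pb := List.append_cancel_right (e1.trans e2.symm)
  have h1 : a.1 = b.1 := by
    rw [← hlasta, ← hlastb]
    congr 1
  exact hab (Prod.ext h1 (ha2.trans hb2.symm))

lemma inDeg_insert_self {F : Finset (V × V)} {e : V × V} (he : e ∉ F) :
    inDeg (insert e F) e.2 = inDeg F e.2 + 1 := by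
  unfold inDeg
  rw [Finset.filter_insert, if_pos rfl,
    Finset.card_insert_of_notMem (fun hc => he (Finset.mem_filter.mp hc).1)]

lemma inDeg_insert_ne {F : Finset (V × V)} {e : V × V} {m : V} (h : e.2 ≠ m) :
    inDeg (insert e F) m = inDeg F m := by
  unfold inDeg; rw [Finset.filter_insert, if_neg h]

lemma inDeg_mono {F G : Finset (V × V)} (h : F ⊆ G) (j : V) : inDeg F j ≤ inDeg G j :=
  Finset.card_le_card (Finset.filter_subset_filter _ h)

lemma inDeg_filter_self {F : Finset (V × V)} (j₀ : V) :
    inDeg (F.filter fun a => a.2 ≠ j₀) j₀ = 0 := by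
  unfold inDeg
  rw [Finset.filter_filter, Finset.card_eq_zero]
  apply Finset.filter_eq_empty_iff.mpr
  rintro a - ⟨h1, h2⟩
  exact h1 h2

lemma inDeg_filter_ne {F : Finset (V × V)} {j₀ j : V} (h : j ≠ j₀) :
    inDeg (F.filter fun a => a.2 ≠ j₀) j = inDeg F j := by
  unfold inDeg
  rw [Finset.filter_filter]
  congr 1
  apply Finset.filter_congr
  intro a _
  constructor
  · exact fun hc => hc.2
  · intro h2
    exact ⟨by rw [h2]; exact h, h2⟩

lemma mem_maxForests_iff {A F : Finset (V × V)} (hA : CircuitFree A) :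
    F ∈ maxForests A ↔
      F ⊆ A ∧ (∀ j, inDeg F j ≤ 1) ∧ ∀ j, 1 ≤ inDeg A j → inDeg F j = 1 := by
  rw [maxForests, Finset.mem_filter, Finset.mem_powerset]; unfold IsMaxSpanningForest
  constructor
  · rintro ⟨hsub, -, hfor, hmax⟩
    have hdeg := indeg_le_one_of_isForest hfor
    refine ⟨hsub, hdeg, fun j hj => ?_⟩
    obtain ⟨i, hij⟩ := inDeg_pos_iff.mp hj
    by_cases hF : (i, j) ∈ F
    · exact le_antisymm (hdeg j) (inDeg_pos_iff.mpr ⟨i, hF⟩)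
    · by_contra hne
      have h0 : inDeg F j = 0 := by have := hdeg j; omega
      apply hmax (i, j) hij hF
      apply isForest_of_indeg (circuitFree_subset (Finset.insert_subset hij hsub) hA)
      intro m
      by_cases hm : m = j
      · subst hm
        have := inDeg_insert_self (F := F) (e := (i, m)) hF
        simp only at this
        omega
      · rw [inDeg_insert_ne (by simpa using Ne.symm hm)]
        exact hdeg m
  · rintro ⟨hsub, hdeg, hfull⟩
    refine ⟨hsub, hsub, isForest_of_indeg (circuitFree_subset hsub hA) hdeg, ?_⟩
    rintro ⟨i, j⟩ hij hnot hins
    have h2 := indeg_le_one_of_isForest hins j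
    have h3 := inDeg_insert_self (F := F) (e := (i, j)) hnot
    simp only at h3
    have h1 : inDeg F j = 1 := hfull j (inDeg_pos_iff.mpr ⟨i, hij⟩)
    omega

lemma not_reach_source {A F : Finset (V × V)} (hA : CircuitFree A) (hF : F ⊆ A)
    {i j₀ m : V} (he : (i, j₀) ∈ A) (hm : Relation.ReflTransGen (Adj A) j₀ m) :
    ¬ Relation.ReflTransGen (Adj F) m i := by
  intro h
  exact hA j₀ (Relation.TransGen.tail' (hm.trans (Relation.ReflTransGen.mono (fun _ _ hab => hF hab) _ _ h)) he)

lemma rtg_insert_of_not_reach {F : Finset (V × V)} {e : V × V} {m x : V}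
    (hm : ¬ Relation.ReflTransGen (Adj (insert e F)) m e.1)
    (h : Relation.ReflTransGen (Adj (insert e F)) m x) :
    Relation.ReflTransGen (Adj F) m x := by
  induction h with
  | refl => exact Relation.ReflTransGen.refl
  | @tail y z hmy hyz IH =>
    rcases Finset.mem_insert.mp (hyz : (y, z) ∈ insert e F) with he' | hF
    · exact absurd ((congrArg Prod.fst he') ▸ hmy) hm
    · exact IH.tail hF

lemma succSet_insert_eq {F : Finset (V × V)} {e : V × V} {m : V}
    (hm : ¬ Relation.ReflTransGen (Adj (insert e F)) m e.1) :
    succSet (insert e F) m = succSet F m := by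
  ext x
  simp only [succSet, Finset.mem_filter, Finset.mem_univ, true_and]
  exact ⟨rtg_insert_of_not_reach hm,
    fun h => Relation.ReflTransGen.mono (fun _ _ hab => Finset.mem_insert_of_mem hab) _ _ h⟩

lemma immSucc_insert_eq {F : Finset (V × V)} {e : V × V} {m : V} (hm : m ≠ e.1) :
    immSucc (insert e F) m = immSucc F m := by
  ext x
  simp only [immSucc, Finset.mem_filter, Finset.mem_univ, true_and, Finset.mem_insert]
  constructor
  · rintro (h | h)
    · exact absurd (congrArg Prod.fst h) hm
    · exact h
  · exact fun h => Or.inr h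

lemma marg_insert_eq {A B : Finset (V × V)} (hA : CircuitFree A) (hBA : B ⊆ A)
    {i j₀ k : V} (he : (i, j₀) ∈ A) (hk : Relation.ReflTransGen (Adj A) j₀ k)
    (v : Finset V → ℝ) :
    marg v (insert (i, j₀) B) k = marg v B k := by
  have hsub : insert (i, j₀) B ⊆ A := Finset.insert_subset he hBA
  have hknr : ¬ Relation.ReflTransGen (Adj (insert (i, j₀) B)) k i :=
    not_reach_source hA hsub he hk
  have h1 : succSet (insert (i, j₀) B) k = succSet B k := succSet_insert_eq hknr
  have hki : k ≠ i := fun h => hknr (h ▸ Relation.ReflTransGen.refl)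
  have h2 : immSucc (insert (i, j₀) B) k = immSucc B k := immSucc_insert_eq hki
  unfold marg
  rw [h1, h2]
  congr 1
  apply Finset.sum_congr rfl
  intro j hj
  have hjmem : (k, j) ∈ B := by
    simpa [immSucc] using hj
  have hkj : Relation.ReflTransGen (Adj A) j₀ j := hk.tail (hBA hjmem)
  exact congrArg v (succSet_insert_eq (not_reach_source hA hsub he hkj))

/-- Base forests: maximal forests of `A` minus all arcs into `j₀`. -/
noncomputable def Bases (A : Finset (V × V)) (i₀ j₀ : V) : Finset (Finset (V × V)) :=
  (A.erase (i₀, j₀)).powerset.filter fun B =>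
    (∀ j, inDeg B j ≤ 1) ∧ inDeg B j₀ = 0 ∧ ∀ j, j ≠ j₀ → 1 ≤ inDeg A j → inDeg B j = 1

lemma mem_Bases_iff {A : Finset (V × V)} {i₀ j₀ : V} {B : Finset (V × V)} :
    B ∈ Bases A i₀ j₀ ↔ B ⊆ A.erase (i₀, j₀) ∧ (∀ j, inDeg B j ≤ 1) ∧ inDeg B j₀ = 0 ∧
      ∀ j, j ≠ j₀ → 1 ≤ inDeg A j → inDeg B j = 1 := by
  constructor
  · intro h
    have h' := Finset.mem_filter.mp h
    exact ⟨Finset.mem_powerset.mp h'.1, h'.2.1, h'.2.2.1, h'.2.2.2⟩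
  · intro h
    exact Finset.mem_filter.mpr ⟨Finset.mem_powerset.mpr h.1, h.2.1, h.2.2.1, h.2.2.2⟩

lemma decomp {A : Finset (V × V)} (hA : CircuitFree A) {i₀ j₀ : V} (ha : (i₀, j₀) ∈ A)
    (X : Finset (V × V)) (hXA : X ⊆ A) (hA'X : A.erase (i₀, j₀) ⊆ X)
    (hX2 : ∀ j, j ≠ j₀ → inDeg X j = inDeg A j) (hDX : 1 ≤ inDeg X j₀)
    (g : Finset (V × V) → ℝ) :
    (∑ F ∈ maxForests X, g F)
        = ∑ p ∈ (Bases A i₀ j₀) ×ˢ (X.filter fun a => a.2 = j₀), g (insert p.2 p.1) ∧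
      (maxForests X).card = (Bases A i₀ j₀).card * (X.filter fun a => a.2 = j₀).card := by
  have hXcf := circuitFree_subset hXA hA
  have hnotin : ∀ B ∈ Bases A i₀ j₀, ∀ a : V × V, a.2 = j₀ → a ∉ B := by
    intro B hB a ha2 hc
    exact inDeg_eq_zero_iff.mp (mem_Bases_iff.mp hB).2.2.1 a.1
      ((Prod.ext rfl ha2.symm : (a.1, j₀) = a) ▸ hc)
  have hmem : ∀ p ∈ (Bases A i₀ j₀) ×ˢ (X.filter fun a => a.2 = j₀),
      insert p.2 p.1 ∈ maxForests X := by
    rintro ⟨B, e⟩ hp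
    obtain ⟨hB, he⟩ := Finset.mem_product.mp hp
    replace hB : B ∈ Bases A i₀ j₀ := hB
    replace he : e ∈ X.filter (fun a => a.2 = j₀) := he
    obtain ⟨hBsub, hdegB, hB0, hBfull⟩ := mem_Bases_iff.mp hB
    obtain ⟨heX, he2⟩ := Finset.mem_filter.mp he
    have heB : e ∉ B := hnotin B hB e he2
    show insert e B ∈ maxForests X
    rw [mem_maxForests_iff hXcf]
    refine ⟨Finset.insert_subset heX (fun a haB => hA'X (hBsub haB)), ?_, ?_⟩
    · intro j
      by_cases hj : j = j₀
      · subst hj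
        have h5 := inDeg_insert_self (F := B) heB
        rw [he2] at h5
        omega
      · rw [inDeg_insert_ne (by rw [he2]; exact Ne.symm hj)]
        exact hdegB j
    · intro j hj
      by_cases hje : j = j₀
      · subst hje
        have h5 := inDeg_insert_self (F := B) heB
        rw [he2] at h5
        omega
      · rw [inDeg_insert_ne (by rw [he2]; exact Ne.symm hje)]
        apply hBfull j hje
        rw [← hX2 j hje]
        exact hj
  have hinj : ∀ p₁ (h₁ : p₁ ∈ (Bases A i₀ j₀) ×ˢ (X.filter fun a => a.2 = j₀))
      p₂ (h₂ : p₂ ∈ (Bases A i₀ j₀) ×ˢ (X.filter fun a => a.2 = j₀)),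
      insert p₁.2 p₁.1 = insert p₂.2 p₂.1 → p₁ = p₂ := by
    rintro ⟨B₁, e₁⟩ h₁ ⟨B₂, e₂⟩ h₂ heq
    obtain ⟨hB₁, he₁⟩ := Finset.mem_product.mp h₁
    obtain ⟨hB₂, he₂⟩ := Finset.mem_product.mp h₂
    have he₁2 := (Finset.mem_filter.mp he₁).2
    have he₂2 := (Finset.mem_filter.mp he₂).2
    have heq : insert e₁ B₁ = insert e₂ B₂ := heq
    have hee : e₁ = e₂ := by
      have : e₁ ∈ insert e₂ B₂ := heq ▸ Finset.mem_insert_self e₁ B₁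
      rcases Finset.mem_insert.mp this with h | h
      · exact h
      · exact absurd h (hnotin B₂ hB₂ e₁ he₁2)
    have hBB : B₁ = B₂ := by
      ext a
      constructor
      · intro haB
        have : a ∈ insert e₂ B₂ := heq ▸ Finset.mem_insert_of_mem haB
        rcases Finset.mem_insert.mp this with h | h
        · exact absurd haB (h ▸ hnotin B₁ hB₁ e₂ he₂2)
        · exact h
      · intro haB
        have : a ∈ insert e₁ B₁ := heq ▸ Finset.mem_insert_of_mem haB
        rcases Finset.mem_insert.mp this with h | h
        · exact absurd haB (h ▸ hnotin B₂ hB₂ e₁ he₁2)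
        · exact h
    simp only [Prod.mk.injEq]
    exact ⟨hBB, hee⟩
  have hsurj : ∀ F ∈ maxForests X,
      ∃ p, ∃ (hp : p ∈ (Bases A i₀ j₀) ×ˢ (X.filter fun a => a.2 = j₀)),
        insert p.2 p.1 = F := by
    intro F hF
    obtain ⟨hsub, hdegF, hfull⟩ := (mem_maxForests_iff hXcf).mp hF
    have h1 : inDeg F j₀ = 1 := hfull j₀ hDX
    obtain ⟨e, hef⟩ := Finset.card_eq_one.mp h1
    have heF : e ∈ F ∧ e.2 = j₀ := Finset.mem_filter.mp (hef ▸ Finset.mem_singleton_self e)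
    refine ⟨(F.filter fun a => a.2 ≠ j₀, e), ?_, ?_⟩
    · rw [Finset.mem_product]
      constructor
      · rw [mem_Bases_iff]
        refine ⟨?_, fun j => le_trans (inDeg_mono (Finset.filter_subset _ _) j) (hdegF j),
          inDeg_filter_self j₀, ?_⟩
        · intro a haB
          obtain ⟨haF, ha2⟩ := Finset.mem_filter.mp haB
          exact Finset.mem_erase.mpr ⟨fun hc => ha2 (by rw [hc]), hXA (hsub haF)⟩
        · intro j hj hAj
          rw [inDeg_filter_ne hj]
          exact hfull j (by rw [hX2 j hj]; exact hAj)
      · exact Finset.mem_filter.mpr ⟨hsub heF.1, heF.2⟩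
    · show insert e (F.filter fun a => a.2 ≠ j₀) = F
      ext a
      simp only [Finset.mem_insert, Finset.mem_filter]
      constructor
      · rintro (rfl | ⟨haF, -⟩)
        · exact heF.1
        · exact haF
      · intro haF
        by_cases ha2 : a.2 = j₀
        · left
          have : a ∈ F.filter (fun a => a.2 = j₀) := Finset.mem_filter.mpr ⟨haF, ha2⟩
          rw [hef] at this
          exact Finset.mem_singleton.mp this
        · exact Or.inr ⟨haF, ha2⟩
  constructor
  · exact (Finset.sum_bij (fun p _ => insert p.2 p.1) hmem hinj hsurj (fun _ _ => rfl)).symm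
  · rw [← Finset.card_product]
    exact (Finset.card_bij (fun p _ => insert p.2 p.1) hmem hinj hsurj).symm

end AuxForest

/-- successor equivalence of the Average Forest measure: deleting an arc
`(i₀, j₀)` does not change the value of `j₀` or of any of its successors. -/
theorem AF_successor_equivalence {V : Type*} [Fintype V] [DecidableEq V]
    (A : Finset (V × V)) (hA : CircuitFree A) (v : Finset V → ℝ)
    (i₀ j₀ : V) (ha : (i₀, j₀) ∈ A) :
    ∀ k : V, Relation.ReflTransGen (Adj A) j₀ k →
      AF v A k = AF v (A.erase (i₀, j₀)) k := by
  intro k hk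
  have hA'A : A.erase (i₀, j₀) ⊆ A := Finset.erase_subset _ _
  have hX2 : ∀ j, j ≠ j₀ → inDeg (A.erase (i₀, j₀)) j = inDeg A j := by
    intro j hj
    unfold inDeg
    rw [Finset.filter_erase, Finset.erase_eq_of_notMem]
    intro hc
    exact hj ((Finset.mem_filter.mp hc).2).symm
  have hmarg : ∀ B ∈ Bases A i₀ j₀, ∀ e : V × V, e ∈ A → e.2 = j₀ →
      marg v (insert e B) k = marg v B k := by
    intro B hB e heA he2
    obtain ⟨e1, e2⟩ := e
    simp only at he2
    subst he2
    have hBsub : B ⊆ A := fun a haB => hA'A ((mem_Bases_iff.mp hB).1 haB)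
    exact marg_insert_eq hA hBsub heA hk v
  -- the common value
  set S : ℝ := ∑ B ∈ Bases A i₀ j₀, marg v B k with hS
  set b : ℕ := (Bases A i₀ j₀).card with hb
  have key : ∀ (X : Finset (V × V)), X ⊆ A → A.erase (i₀, j₀) ⊆ X →
      (∀ j, j ≠ j₀ → inDeg X j = inDeg A j) → 1 ≤ inDeg X j₀ →
      AF v X k = S / b := by
    intro X hXA hA'X hX2' hDX
    obtain ⟨hsum, hcard⟩ := decomp hA ha X hXA hA'X hX2' hDX (fun F => marg v F k)
    have hd0 : ((X.filter fun a => a.2 = j₀).card : ℝ) ≠ 0 := by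
      have : (X.filter fun a => a.2 = j₀).card ≠ 0 := by
        have : 1 ≤ (X.filter fun a => a.2 = j₀).card := hDX
        omega
      exact_mod_cast this
    have hsum2 : (∑ p ∈ (Bases A i₀ j₀) ×ˢ (X.filter fun a => a.2 = j₀),
        marg v (insert p.2 p.1) k)
        = ((X.filter fun a => a.2 = j₀).card : ℝ) * S := by
      rw [show (∑ p ∈ (Bases A i₀ j₀) ×ˢ (X.filter fun a => a.2 = j₀),
          marg v (insert p.2 p.1) k)
          = ∑ p ∈ (Bases A i₀ j₀) ×ˢ (X.filter fun a => a.2 = j₀), marg v p.1 k from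
        Finset.sum_congr rfl (fun p hp => by
          obtain ⟨h1, h2⟩ := Finset.mem_product.mp hp
          obtain ⟨heX, h2'⟩ := Finset.mem_filter.mp h2
          exact hmarg p.1 h1 p.2 (hXA heX) h2')]
      rw [Finset.sum_product]
      simp only [Finset.sum_const, nsmul_eq_mul]
      rw [← Finset.mul_sum, hS]
    unfold AF
    rw [hsum, hsum2, hcard]
    push_cast
    rw [mul_comm (b : ℝ) _]
    exact mul_div_mul_left _ _ hd0
  have hAF_A : AF v A k = S / b :=
    key A subset_rfl hA'A (fun _ _ => rfl) (inDeg_pos_iff.mpr ⟨i₀, ha⟩)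
  by_cases hD' : 1 ≤ inDeg (A.erase (i₀, j₀)) j₀
  · rw [hAF_A, key (A.erase (i₀, j₀)) hA'A subset_rfl hX2 hD']
  · have h0 : inDeg (A.erase (i₀, j₀)) j₀ = 0 := by omega
    have hMF : maxForests (A.erase (i₀, j₀)) = Bases A i₀ j₀ := by
      ext F
      rw [mem_maxForests_iff (circuitFree_subset hA'A hA), mem_Bases_iff]
      constructor
      · rintro ⟨hs, hdeg, hfull⟩
        refine ⟨hs, hdeg, ?_, fun j hj hAj => hfull j (by rw [hX2 j hj]; exact hAj)⟩
        have := inDeg_mono hs j₀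
        omega
      · rintro ⟨hs, hdeg, hF0, hfull⟩
        refine ⟨hs, hdeg, fun j hAj => ?_⟩
        by_cases hj : j = j₀
        · subst hj
          rw [h0] at hAj
          omega
        · exact hfull j hj (by rw [← hX2 j hj]; exact hAj)
    rw [hAF_A]
    unfold AF
    rw [hMF]
end
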